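/- Let A be a symmetric matrix indexed by V and let S be a proper strongly homogeneous set for A. Then A is Robinsonian if and only if both the restriction A[S] and the contraction A/S are Robinsonian. -/

import Mathlib

/-- The consecutive pairs of `l` avoid `z` with respect to the matrix `A`. -/
def AvoidChain {V : Type*} (A : V → V → ℝ) (z : V) (l : List V) : Prop :=
  l.Chain' fun u w => min (A u z) (A w z) < A u w

/-- `l` is a path from `x` to `y` avoiding `z` in `A`: a sequence of distinct
elements starting at `x`, ending at `y`, each consecutive pair avoiding `z`. -/
def AvoidPath {V : Type*} (A : V → V → ℝ) (z x y : V) (l : List V) : Prop :=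
  l.Nodup ∧ l.head? = some x ∧ l.getLast? = some y ∧ AvoidChain A z l

/-- `x ~^z y`: there is a path from `x` to `y` avoiding `z` in `A`. -/
def Avoids {V : Type*} (A : V → V → ℝ) (z x y : V) : Prop :=
  ∃ l, AvoidPath A z x y l

/-- `{x,y,z}` is a weighted asteroidal triple of `A`. -/
def IsWAT {V : Type*} (A : V → V → ℝ) (x y z : V) : Prop :=
  x ≠ y ∧ y ≠ z ∧ x ≠ z ∧ Avoids A z x y ∧ Avoids A x y z ∧ Avoids A y z x

/-- `π` is a Robinson ordering of `A`. -/
def IsRobinsonOrdering {V : Type*} [Fintype V] (A : V → V → ℝ)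
    (π : Fin (Fintype.card V) ≃ V) : Prop :=
  ∀ i j k : Fin (Fintype.card V), i < j → j < k →
    A (π i) (π k) ≤ min (A (π i) (π j)) (A (π j) (π k))

/-- `A` is Robinsonian: it admits a Robinson ordering. -/
def Robinsonian {V : Type*} [Fintype V] (A : V → V → ℝ) : Prop :=
  ∃ π : Fin (Fintype.card V) ≃ V, IsRobinsonOrdering A π

/-- `S` is strongly homogeneous for `A`. -/
def StronglyHomogeneous {V : Type*} [DecidableEq V] (A : V → V → ℝ) (S : Finset V) : Prop :=
  ∀ x ∉ S, ∀ y ∈ S, ∀ z ∈ S, A x y = A x z ∧ A x y ≤ A y z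

/-- `a` is critical for `A`: between any two distinct elements of `V \ {a}`
there is a path avoiding `a`. -/
def IsCritical {V : Type*} (A : V → V → ℝ) (a : V) : Prop :=
  ∀ x y : V, x ≠ a → y ≠ a → x ≠ y → Avoids A a x y

/-- The similarity layers of `A` rooted at `a`, together with the union of the
layers so far: `(simLayersAux A a n).1` is the `n`-th layer `X_n` and
`(simLayersAux A a n).2 = X_0 ∪ ⋯ ∪ X_n`. -/
def simLayersAux {V : Type*} (A : V → V → ℝ) (a : V) : ℕ → Set V × Set V
  | 0 => ({a}, {a})
  | n + 1 =>
    let U := (simLayersAux A a n).2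
    let L := { y | y ∉ U ∧ ∀ x ∈ U, ∀ z ∉ U, A x z ≤ A x y }
    (L, U ∪ L)

/-- The `n`-th similarity layer `X_n` of `A` rooted at `a`. -/
def simLayer {V : Type*} (A : V → V → ℝ) (a : V) (n : ℕ) : Set V :=
  (simLayersAux A a n).1

lemma robinsonian_of_inj {V : Type*} [Fintype V] {α : Type*} [LinearOrder α]
    (A : V → V → ℝ) (f : V → α) (hf : Function.Injective f)
    (h : ∀ x y z : V, f x < f y → f y < f z → A x z ≤ min (A x y) (A y z)) :
    Robinsonian A := by
  letI : LinearOrder V := LinearOrder.lift' f hf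
  have hlt : ∀ a b : V, a < b → f a < f b := by
    intro a b hab
    have hle : f a ≤ f b := hab.le
    exact lt_of_le_of_ne hle fun e => hab.ne (hf e)
  let e : Fin (Fintype.card V) ≃o V := monoEquivOfFin V rfl
  refine ⟨e.toEquiv, ?_⟩
  intro i j k hij hjk
  exact h _ _ _ (hlt _ _ (e.strictMono hij)) (hlt _ _ (e.strictMono hjk))

lemma robinsonian_restrict {V : Type*} [Fintype V] (A : V → V → ℝ) (P : V → Prop)
    [Fintype {v : V // P v}]
    (hA : Robinsonian A) : Robinsonian (fun u v : {v : V // P v} => A u v) := by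
  obtain ⟨π, hπ⟩ := hA
  refine robinsonian_of_inj _ (fun v => π.symm v.1) ?_ ?_
  · intro a b hab
    exact Subtype.ext (π.symm.injective hab)
  · intro x y z hxy hyz
    have := hπ _ _ _ hxy hyz
    simpa using this

theorem stmt_3 {V : Type*} [Fintype V] [DecidableEq V] (A : V → V → ℝ)
    (hsym : ∀ u v : V, A u v = A v u)
    (S : Finset V) (hhom : StronglyHomogeneous A S)
    (hcard : 2 ≤ S.card) (hproper : S.card ≤ Fintype.card V - 1)
    (s : V) (hs : s ∈ S) :
    Robinsonian A ↔
      (Robinsonian (fun u v : {v : V // v ∈ S} => A u v) ∧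
       Robinsonian (fun u v : {v : V // v ∈ (Finset.univ \ S) ∪ {s}} => A u v)) := by
  constructor
  · intro hA
    exact ⟨robinsonian_restrict A _ hA, robinsonian_restrict A _ hA⟩
  · rintro ⟨⟨σ, hσ⟩, ⟨π, hπ⟩⟩
    have memW : ∀ v : V, v ∉ S → v ∈ (Finset.univ \ S) ∪ {s} := by
      intro v hv; simp [hv]
    have hsW : s ∈ (Finset.univ \ S) ∪ {s} := by simp
    set sW : {v : V // v ∈ (Finset.univ \ S) ∪ {s}} := ⟨s, hsW⟩ with hsWdef
    -- translated Robinson properties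
    have hπ' : ∀ u v w : {v : V // v ∈ (Finset.univ \ S) ∪ {s}},
        π.symm u < π.symm v → π.symm v < π.symm w →
        A u.1 w.1 ≤ min (A u.1 v.1) (A v.1 w.1) := by
      intro u v w h1 h2
      have := hπ _ _ _ h1 h2
      simpa using this
    have hσ' : ∀ u v w : {v : V // v ∈ S},
        σ.symm u < σ.symm v → σ.symm v < σ.symm w →
        A u.1 w.1 ≤ min (A u.1 v.1) (A v.1 w.1) := by
      intro u v w h1 h2
      have := hσ _ _ _ h1 h2
      simpa using this
    -- the combined ordering, encoded into ℕ ×ₗ ℕ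
    set p : V → ℕ := fun v =>
      if h : v ∈ S then ((π.symm sW : Fin _) : ℕ) else ((π.symm ⟨v, memW v h⟩ : Fin _) : ℕ)
      with hp
    set q : V → ℕ := fun v => if h : v ∈ S then ((σ.symm ⟨v, h⟩ : Fin _) : ℕ) else 0 with hq
    have hpS : ∀ v (h : v ∈ S), p v = ((π.symm sW : Fin _) : ℕ) := by
      intro v h; simp [hp, h]
    have hpN : ∀ v (h : v ∉ S), p v = ((π.symm ⟨v, memW v h⟩ : Fin _) : ℕ) := by
      intro v h; simp [hp, h]
    have hqS : ∀ v (h : v ∈ S), q v = ((σ.symm ⟨v, h⟩ : Fin _) : ℕ) := by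
      intro v h; simp [hq, h]
    have hqN : ∀ v (h : v ∉ S), q v = 0 := by
      intro v h; simp [hq, h]
    set f : V → ℕ ×ₗ ℕ := fun v => toLex (p v, q v) with hfdef
    have flt : ∀ a b : V, f a < f b ↔ p a < p b ∨ (p a = p b ∧ q a < q b) := by
      intro a b
      exact Prod.Lex.lt_iff
    -- transfers of the lex order to the constituent orders
    have hfS : ∀ a b (ha : a ∈ S) (hb : b ∈ S), f a < f b →
        σ.symm ⟨a, ha⟩ < σ.symm ⟨b, hb⟩ := by
      intro a b ha hb hab
      rcases (flt a b).mp hab with h | ⟨_, h⟩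
      · rw [hpS a ha, hpS b hb] at h; exact absurd h (lt_irrefl _)
      · rw [hqS a ha, hqS b hb] at h
        exact h
    have hfN : ∀ a b (ha : a ∉ S) (hb : b ∉ S), f a < f b →
        π.symm ⟨a, memW a ha⟩ < π.symm ⟨b, memW b hb⟩ := by
      intro a b ha hb hab
      rcases (flt a b).mp hab with h | ⟨_, h⟩
      · rw [hpN a ha, hpN b hb] at h; exact h
      · rw [hqN a ha, hqN b hb] at h; exact absurd h (lt_irrefl _)
    have hfSN : ∀ a b (ha : a ∈ S) (hb : b ∉ S), f a < f b →
        π.symm sW < π.symm ⟨b, memW b hb⟩ := by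
      intro a b ha hb hab
      rcases (flt a b).mp hab with h | ⟨h, _⟩
      · rw [hpS a ha, hpN b hb] at h; exact h
      · rw [hpS a ha, hpN b hb] at h
        have hsb : s = b := congrArg Subtype.val (π.symm.injective (Fin.val_injective h))
        exact absurd (hsb ▸ hs) hb
    have hfNS : ∀ a b (ha : a ∉ S) (hb : b ∈ S), f a < f b →
        π.symm ⟨a, memW a ha⟩ < π.symm sW := by
      intro a b ha hb hab
      rcases (flt a b).mp hab with h | ⟨h, _⟩
      · rw [hpN a ha, hpS b hb] at h; exact h
      · rw [hpN a ha, hpS b hb] at h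
        have hab' : a = s := congrArg Subtype.val (π.symm.injective (Fin.val_injective h))
        exact absurd (by rw [hab']; exact hs) ha
    -- injectivity
    have hfinj : Function.Injective f := by
      intro a b hab
      have hab' : p a = p b ∧ q a = q b := by
        have := congrArg (fun x => ofLex x) hab
        exact Prod.mk.injEq _ _ _ _ ▸ Prod.ext_iff.mp this
      by_cases ha : a ∈ S <;> by_cases hb : b ∈ S
      · have := hab'.2
        rw [hqS a ha, hqS b hb] at this
        have := σ.symm.injective (Fin.val_injective this)
        exact congrArg Subtype.val this
      · have := hab'.1
        rw [hpS a ha, hpN b hb] at this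
        have := π.symm.injective (Fin.val_injective this)
        have : s = b := congrArg Subtype.val this
        exact absurd (this ▸ hs) hb
      · have := hab'.1
        rw [hpN a ha, hpS b hb] at this
        have := π.symm.injective (Fin.val_injective this)
        have : a = s := congrArg Subtype.val this
        exact absurd (this ▸ hs) ha
      · have := hab'.1
        rw [hpN a ha, hpN b hb] at this
        have := π.symm.injective (Fin.val_injective this)
        exact congrArg Subtype.val this
    refine robinsonian_of_inj A f hfinj ?_
    intro x y z hxy hyz
    by_cases hx : x ∈ S <;> by_cases hy : y ∈ S <;> by_cases hz : z ∈ S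
    · -- T T T
      exact hσ' ⟨x, hx⟩ ⟨y, hy⟩ ⟨z, hz⟩ (hfS x y hx hy hxy) (hfS y z hy hz hyz)
    · -- T T F
      obtain ⟨e1, e2⟩ := hhom z hz x hx y hy
      rw [le_min_iff]
      constructor <;> linarith [hsym x z, hsym y z]
    · -- T F T : impossible
      exact absurd (hfSN x y hx hy hxy) (lt_asymm (hfNS y z hy hz hyz))
    · -- T F F
      have h1 := hπ' sW ⟨y, memW y hy⟩ ⟨z, memW z hz⟩ (hfSN x y hx hy hxy) (hfN y z hy hz hyz)
      obtain ⟨e1, _⟩ := hhom z hz x hx s hs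
      obtain ⟨e2, _⟩ := hhom y hy x hx s hs
      rw [le_min_iff] at h1 ⊢
      constructor <;> linarith [h1.1, h1.2, hsym x z, hsym z s, hsym x y, hsym y s]
    · -- F T T
      obtain ⟨e1, e2⟩ := hhom x hx y hy z hz
      rw [le_min_iff]
      constructor <;> linarith
    · -- F T F
      have h1 := hπ' ⟨x, memW x hx⟩ sW ⟨z, memW z hz⟩ (hfNS x y hx hy hxy) (hfSN y z hy hz hyz)
      obtain ⟨e1, _⟩ := hhom x hx y hy s hs
      obtain ⟨e2, _⟩ := hhom z hz y hy s hs
      rw [le_min_iff] at h1 ⊢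
      constructor <;> linarith [h1.1, h1.2, hsym y z, hsym z s, hsym s z]
    · -- F F T
      have h1 := hπ' ⟨x, memW x hx⟩ ⟨y, memW y hy⟩ sW (hfN x y hx hy hxy) (hfNS y z hy hz hyz)
      obtain ⟨e1, _⟩ := hhom x hx z hz s hs
      obtain ⟨e2, _⟩ := hhom y hy z hz s hs
      rw [le_min_iff] at h1 ⊢
      constructor <;> linarith [h1.1, h1.2]
    · -- F F F
      exact hπ' ⟨x, memW x hx⟩ ⟨y, memW y hy⟩ ⟨z, memW z hz⟩ (hfN x y hx hy hxy) (hfN y z hy hz hyz)
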